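/- Let r ≥ 2 be an integer and β̃ > 0. Define C(β̃, r) = e^{β̃/r} · r for the high-temperature branch and C⁺(β̃, r) = e^{β̃/r}·(e^{β̃(r-1)u/r} + (r-1)e^{-β̃u/r}) for the low-temperature branch with u = u(β̃, r) the largest solution of the mean-field equation. At β̃ = β_c(r) with u = (r-2)/(r-1) one has C(β_c(r),r) = r·(r-1)^{2(r-1)/(r(r-2))} and C⁺(β_c(r),r) = r·(r-1)^{(r-2)/r}·(r-1)^{2(r-1)/(r(r-2))}; hence C⁺(β_c(r),r)/C(β_c(r),r) = (r-1)^{(r-2)/r}, which is strictly greater than 1 if and only if r ≥ 3. -/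

import Mathlib

/-- Mean-field Potts critical inverse temperature for `r > 2`. -/
noncomputable def betac (r : ℝ) : ℝ := 2 * (r - 1) / (r - 2) * Real.log (r - 1)

/-- The two one-sided limits of the function `C(·,r)` of the mean-field fuzzy Potts model
at the critical point `β_c(r)`, with `u = (r-2)/(r-1)`: for `r ≥ 3` one has
`C(β_c(r),r) = r (r-1)^{2(r-1)/(r(r-2))}`,
`C⁺(β_c(r),r) = r (r-1)^{(r-2)/r} (r-1)^{2(r-1)/(r(r-2))}`, and hence
`C⁺/C = (r-1)^{(r-2)/r}`; this ratio is `> 1` iff `r ≥ 3`. -/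
theorem critical_jump (r : ℕ) (hr : 2 ≤ r) :
    (3 ≤ r →
      (Real.exp (betac r / (r : ℝ)) * (r : ℝ)
          = (r : ℝ) * ((r : ℝ) - 1) ^ ((2 * ((r : ℝ) - 1)) / ((r : ℝ) * ((r : ℝ) - 2)))) ∧
      (Real.exp (betac r / (r : ℝ))
          * (Real.exp (betac r * ((r : ℝ) - 1) * (((r : ℝ) - 2) / ((r : ℝ) - 1)) / (r : ℝ))
            + ((r : ℝ) - 1)
              * Real.exp (-(betac r) * (((r : ℝ) - 2) / ((r : ℝ) - 1)) / (r : ℝ)))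
          = (r : ℝ) * ((r : ℝ) - 1) ^ (((r : ℝ) - 2) / (r : ℝ))
              * ((r : ℝ) - 1) ^ ((2 * ((r : ℝ) - 1)) / ((r : ℝ) * ((r : ℝ) - 2)))) ∧
      ((Real.exp (betac r / (r : ℝ))
          * (Real.exp (betac r * ((r : ℝ) - 1) * (((r : ℝ) - 2) / ((r : ℝ) - 1)) / (r : ℝ))
            + ((r : ℝ) - 1)
              * Real.exp (-(betac r) * (((r : ℝ) - 2) / ((r : ℝ) - 1)) / (r : ℝ))))
          / (Real.exp (betac r / (r : ℝ)) * (r : ℝ))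
          = ((r : ℝ) - 1) ^ (((r : ℝ) - 2) / (r : ℝ)))) ∧
    (1 < ((r : ℝ) - 1) ^ (((r : ℝ) - 2) / (r : ℝ)) ↔ 3 ≤ r) := by
  constructor
  · intro hr3
    have hx3 : (3 : ℝ) ≤ (r : ℝ) := by exact_mod_cast hr3
    set x : ℝ := (r : ℝ) with hxdef
    have hx0 : x ≠ 0 := by intro h; linarith
    have hx2 : x - 2 ≠ 0 := by intro h; linarith
    have hP : (0 : ℝ) < x - 1 := by linarith
    have hP1 : x - 1 ≠ 0 := ne_of_gt hP
    set L : ℝ := Real.log (x - 1) with hLdef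
    have hE : ∀ t : ℝ, (x - 1) ^ t = Real.exp (t * L) := by
      intro t; rw [Real.rpow_def_of_pos hP, mul_comm]
    have hPL : x - 1 = Real.exp L := (Real.exp_log hP).symm
    have e1 : betac x / x = (2 * (x - 1)) / (x * (x - 2)) * L := by
      unfold betac
      field_simp
      ring
    have first : Real.exp (betac x / x) * x
        = x * (x - 1) ^ ((2 * (x - 1)) / (x * (x - 2))) := by
      rw [hE, e1]; ring
    have second : Real.exp (betac x / x)
        * (Real.exp (betac x * (x - 1) * ((x - 2) / (x - 1)) / x)
          + (x - 1) * Real.exp (-(betac x) * ((x - 2) / (x - 1)) / x))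
        = x * (x - 1) ^ ((x - 2) / x) * (x - 1) ^ ((2 * (x - 1)) / (x * (x - 2))) := by
      set s : ℝ := ((x - 2) / x) * L + (2 * (x - 1)) / (x * (x - 2)) * L with hsdef
      have h1 : betac x / x + betac x * (x - 1) * ((x - 2) / (x - 1)) / x = s + L := by
        unfold betac; rw [hsdef]; field_simp; ring
      have h2 : betac x / x + (-(betac x) * ((x - 2) / (x - 1)) / x) = s - L := by
        unfold betac; rw [hsdef]; field_simp; ring
      have step1 : Real.exp (betac x / x)
          * (Real.exp (betac x * (x - 1) * ((x - 2) / (x - 1)) / x)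
            + (x - 1) * Real.exp (-(betac x) * ((x - 2) / (x - 1)) / x))
          = Real.exp (betac x / x + betac x * (x - 1) * ((x - 2) / (x - 1)) / x)
            + (x - 1) * Real.exp (betac x / x + (-(betac x) * ((x - 2) / (x - 1)) / x)) := by
        rw [Real.exp_add, Real.exp_add]; ring
      rw [step1, h1, h2, Real.exp_add, Real.exp_sub, ← hPL, hE, hE, hsdef, Real.exp_add]
      field_simp
      ring
    refine ⟨first, second, ?_⟩
    rw [second, first]
    have hA : (x - 1) ^ ((2 * (x - 1)) / (x * (x - 2))) ≠ 0 :=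
      ne_of_gt (Real.rpow_pos_of_pos hP _)
    field_simp
  · constructor
    · intro h
      by_contra hlt
      push_neg at hlt
      interval_cases r
      · norm_num at h
    · intro hr3
      have hx3 : (3 : ℝ) ≤ (r : ℝ) := by exact_mod_cast hr3
      have h1 : (1 : ℝ) < (r : ℝ) - 1 := by linarith
      have h2 : (0 : ℝ) < ((r : ℝ) - 2) / (r : ℝ) := by
        apply div_pos <;> linarith
      exact (Real.one_lt_rpow_iff_of_pos (by linarith)).mpr (Or.inl ⟨h1, h2⟩)
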